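/- For 0 < a < b, ∫_0^1 |1−2t|/(tb+(1−t)a)² dt = 1/(ab) − (2/(b−a)²) ln((a+b)²/(4ab)). -/

import Mathlib

open Real Set intervalIntegral

def HarmonicallyConvexOn (I : Set ℝ) (f : ℝ → ℝ) : Prop :=
  ∀ x ∈ I, ∀ y ∈ I, ∀ t ∈ Set.Icc (0:ℝ) 1,
    f (x * y / (t * x + (1 - t) * y)) ≤ t * f y + (1 - t) * f x

lemma aux_deriv (a b : ℝ) (hab : a < b) (t : ℝ) (ht : 0 < a + (b - a) * t) :
    HasDerivAt (fun s => ((b - a) ^ 2)⁻¹ *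
        (-(a + b) / (a + (b - a) * s) - 2 * Real.log (a + (b - a) * s)))
      ((1 - 2 * t) / (a + (b - a) * t) ^ 2) t := by
  have hu : HasDerivAt (fun s : ℝ => a + (b - a) * s) (b - a) t := by
    simpa using ((hasDerivAt_id t).const_mul (b - a)).const_add a
  have h1 : HasDerivAt (fun s : ℝ => -(a + b) / (a + (b - a) * s))
      ((0 * (a + (b - a) * t) - (-(a + b)) * (b - a)) / (a + (b - a) * t) ^ 2) t :=
    (hasDerivAt_const t (-(a + b))).div hu ht.ne'
  have h2 : HasDerivAt (fun s : ℝ => Real.log (a + (b - a) * s))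
      ((b - a) / (a + (b - a) * t)) t := hu.log ht.ne'
  have := ((h1.sub (h2.const_mul 2)).const_mul ((b - a) ^ 2)⁻¹)
  refine this.congr_deriv ?_
  have hc : (0:ℝ) < b - a := by linarith
  have hne1 := ht.ne'
  have hne2 := hc.ne'
  field_simp
  ring

theorem stmt9 (a b : ℝ) (ha : 0 < a) (hab : a < b) :
    ∫ t in (0:ℝ)..1, |1 - 2 * t| / (t * b + (1 - t) * a) ^ 2 =
      1 / (a * b) - 2 / (b - a) ^ 2 * Real.log ((a + b) ^ 2 / (4 * a * b)) := by
  have hc : (0:ℝ) < b - a := by linarith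
  have hb : (0:ℝ) < b := lt_trans ha hab
  set F : ℝ → ℝ := fun s => ((b - a) ^ 2)⁻¹ *
      (-(a + b) / (a + (b - a) * s) - 2 * Real.log (a + (b - a) * s)) with hF
  have hpos : ∀ t ∈ Set.Icc (0:ℝ) 1, 0 < a + (b - a) * t := by
    intro t ht
    nlinarith [ht.1, ht.2]
  have hint : ∀ u v : ℝ, u ∈ Set.Icc (0:ℝ) 1 → v ∈ Set.Icc (0:ℝ) 1 →
      IntervalIntegrable (fun t => (1 - 2 * t) / (a + (b - a) * t) ^ 2) MeasureTheory.volume u v := by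
    intro u v hu hv
    apply ContinuousOn.intervalIntegrable
    apply ContinuousOn.div (by fun_prop) (by fun_prop)
    intro t ht
    have : t ∈ Set.Icc (0:ℝ) 1 := by
      rcases ht with ht
      constructor
      · exact le_trans (le_min hu.1 hv.1) ht.1
      · exact le_trans ht.2 (max_le hu.2 hv.2)
    exact pow_ne_zero _ (hpos t this).ne'
  have hsub : ∀ u v : ℝ, u ∈ Set.Icc (0:ℝ) 1 → v ∈ Set.Icc (0:ℝ) 1 →
      ∫ t in u..v, (1 - 2 * t) / (a + (b - a) * t) ^ 2 = F v - F u := by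
    intro u v hu hv
    apply intervalIntegral.integral_eq_sub_of_hasDerivAt
    · intro t ht
      apply aux_deriv a b hab
      apply hpos
      rcases ht with ht
      constructor
      · exact le_trans (le_min hu.1 hv.1) ht.1
      · exact le_trans ht.2 (max_le hu.2 hv.2)
    · exact hint u v hu hv
  have h0 : (0:ℝ) ∈ Set.Icc (0:ℝ) 1 := by norm_num
  have hh : (1/2:ℝ) ∈ Set.Icc (0:ℝ) 1 := by norm_num
  have h1 : (1:ℝ) ∈ Set.Icc (0:ℝ) 1 := by norm_num
  have hsplit : ∫ t in (0:ℝ)..1, |1 - 2 * t| / (t * b + (1 - t) * a) ^ 2 =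
      (∫ t in (0:ℝ)..(1/2), (1 - 2 * t) / (a + (b - a) * t) ^ 2) +
      ∫ t in (1/2:ℝ)..1, -((1 - 2 * t) / (a + (b - a) * t) ^ 2) := by
    have c1 : (∫ t in (0:ℝ)..(1/2), (1 - 2 * t) / (a + (b - a) * t) ^ 2) =
        ∫ t in (0:ℝ)..(1/2), |1 - 2 * t| / (t * b + (1 - t) * a) ^ 2 := by
      apply intervalIntegral.integral_congr
      intro t ht
      simp only [Set.uIcc_of_le (by norm_num : (0:ℝ) ≤ 1/2)] at ht
      have habs : |1 - 2 * t| = 1 - 2 * t := abs_of_nonneg (by linarith [ht.2])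
      have hd : t * b + (1 - t) * a = a + (b - a) * t := by ring
      simp only [habs, hd]
    have c2 : (∫ t in (1/2:ℝ)..1, -((1 - 2 * t) / (a + (b - a) * t) ^ 2)) =
        ∫ t in (1/2:ℝ)..1, |1 - 2 * t| / (t * b + (1 - t) * a) ^ 2 := by
      apply intervalIntegral.integral_congr
      intro t ht
      simp only [Set.uIcc_of_le (by norm_num : (1/2:ℝ) ≤ 1)] at ht
      have habs : |1 - 2 * t| = -(1 - 2 * t) := abs_of_nonpos (by linarith [ht.1])
      have hd : t * b + (1 - t) * a = a + (b - a) * t := by ring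
      simp only [habs, hd, neg_div]
    rw [c1, c2]
    apply (intervalIntegral.integral_add_adjacent_intervals ?_ ?_).symm
    · apply ContinuousOn.intervalIntegrable
      apply ContinuousOn.div (by fun_prop) (by fun_prop)
      intro t ht
      simp only [Set.uIcc_of_le (by norm_num : (0:ℝ) ≤ 1/2)] at ht
      have h := hpos t ⟨ht.1, le_trans ht.2 (by norm_num)⟩
      have : t * b + (1 - t) * a = a + (b - a) * t := by ring
      rw [this]
      exact pow_ne_zero _ h.ne'
    · apply ContinuousOn.intervalIntegrable
      apply ContinuousOn.div (by fun_prop) (by fun_prop)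
      intro t ht
      simp only [Set.uIcc_of_le (by norm_num : (1/2:ℝ) ≤ 1)] at ht
      have h := hpos t ⟨le_trans (by norm_num) ht.1, ht.2⟩
      have : t * b + (1 - t) * a = a + (b - a) * t := by ring
      rw [this]
      exact pow_ne_zero _ h.ne'
  rw [hsplit, intervalIntegral.integral_neg, hsub 0 (1/2) h0 hh, hsub (1/2) 1 hh h1]
  have e0 : a + (b - a) * 0 = a := by ring
  have eh : a + (b - a) * (1/2) = (a + b) / 2 := by ring
  have e1 : a + (b - a) * 1 = b := by ring
  simp only [hF, e0, eh, e1]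
  have hab2 : (0:ℝ) < a + b := by linarith
  rw [show ((a+b)/2 : ℝ) = (a+b)/2 from rfl,
    Real.log_div hab2.ne' (by norm_num),
    Real.log_div (by positivity) (by positivity),
    Real.log_pow, show (4:ℝ) * a * b = 2^2 * (a*b) by ring,
    Real.log_mul (by positivity) (by positivity),
    Real.log_mul ha.ne' hb.ne', Real.log_pow]
  push_cast
  field_simp
  ring
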